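/- Let n, s, t ≥ 1 be integers with s ≤ n, and let F be a field of characteristic 0. Let S = { x ∈ {−1, 1}^n : |Σ_{j=1}^n x_j| ≤ n/s }. Suppose there exist vectors x^1, …, x^t ∈ S and coefficients c_1, …, c_t ∈ F such that the all-ones vector 1^n equals Σ_{i=1}^t c_i · x^i in F^n, where entries of the x^i are viewed in F via the canonical embedding of ℤ. Then (t+1)! ≥ s. -/

import Mathlib

open Matrix Finset in
lemma det_abs_le_factorial {ι : Type*} [Fintype ι] [DecidableEq ι]
    (A : Matrix ι ι ℚ) (h : ∀ k l, |A k l| ≤ 1) :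
    |A.det| ≤ (Fintype.card ι).factorial := by
  rw [Matrix.det_apply]
  calc |∑ σ : Equiv.Perm ι, Equiv.Perm.sign σ • ∏ i, A (σ i) i|
      ≤ ∑ σ : Equiv.Perm ι, |Equiv.Perm.sign σ • ∏ i, A (σ i) i| :=
        Finset.abs_sum_le_sum_abs _ _
    _ ≤ ∑ σ : Equiv.Perm ι, 1 := by
        refine Finset.sum_le_sum fun σ _ => ?_
        rw [Units.smul_def, zsmul_eq_mul, abs_mul]
        have h1 : |((Equiv.Perm.sign σ : ℤ) : ℚ)| = 1 := by
          rcases Int.units_eq_one_or (Equiv.Perm.sign σ) with h' | h' <;> simp [h']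
        rw [h1, one_mul, abs_prod]
        exact Finset.prod_le_one (fun i _ => abs_nonneg _) (fun i _ => h _ _)
    _ = (Fintype.card ι).factorial := by
        simp [Finset.card_univ, Fintype.card_perm]

open Matrix in
lemma exists_rows_isUnit {n : ℕ} {ι : Type} [Fintype ι] [DecidableEq ι]
    (w : ι → Fin n → ℚ) (hind : LinearIndependent ℚ w) :
    ∃ g : ι → Fin n, IsUnit (Matrix.of fun k l : ι => w k (g l)) := by
  set M : Matrix ι (Fin n) ℚ := Matrix.of w with hM
  have hrank : M.rank = Fintype.card ι := hind.rank_matrix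
  have hspan : Submodule.span ℚ (Set.range Mᵀ) = ⊤ := by
    apply Submodule.eq_top_of_finrank_eq
    have := M.rank_eq_finrank_span_cols
    rw [hrank] at this
    rw [show Set.range Mᵀ = Set.range M.col from rfl, ← this, Module.finrank_pi]
  obtain ⟨b, hb_sub, hb_span, hb_ind⟩ := exists_linearIndependent ℚ (Set.range Mᵀ)
  rw [hspan] at hb_span
  have hb_fin : b.Finite := (Set.finite_range Mᵀ).subset hb_sub
  haveI := hb_fin.fintype
  have hbasis : Module.finrank ℚ (ι → ℚ) = Fintype.card b := by
    have hb : Submodule.span ℚ (Set.range ((↑) : b → (ι → ℚ))) = ⊤ := by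
      rw [Subtype.range_coe]; exact hb_span
    have B := Module.Basis.mk hb_ind (by rw [hb])
    exact Module.finrank_eq_card_basis B
  have hcard : Fintype.card b = Fintype.card ι := by
    rw [Module.finrank_pi] at hbasis; omega
  obtain ⟨e⟩ : Nonempty (ι ≃ b) := ⟨(Fintype.equivOfCardEq hcard.symm)⟩
  choose g hg using fun v : b => (hb_sub v.2 : (v : ι → ℚ) ∈ Set.range Mᵀ)
  refine ⟨fun l => g (e l), ?_⟩
  rw [← Matrix.linearIndependent_cols_iff_isUnit]
  have hcols : (Matrix.of fun k l : ι => w k (g (e l)))ᵀ = fun l => ((e l : ι → ℚ)) := by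
    funext l k
    have := hg (e l)
    have h2 : Mᵀ (g (e l)) = (e l : ι → ℚ) := this
    calc w k (g (e l)) = Mᵀ (g (e l)) k := rfl
      _ = (e l : ι → ℚ) k := by rw [h2]
  change LinearIndependent ℚ (Matrix.of fun k l : ι => w k (g (e l)))ᵀ
  rw [hcols]
  exact hb_ind.comp e e.injective

open Matrix in
lemma coeff_bound {n : ℕ} {ι : Type} [Fintype ι] [DecidableEq ι]
    (w : ι → Fin n → ℚ) (hw : ∀ k j, w k j = 1 ∨ w k j = -1)
    (hind : LinearIndependent ℚ w) (a : ι → ℚ)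
    (ha : ∀ j, (1 : ℚ) = ∑ k, a k * w k j) :
    ∀ k, |a k| ≤ (Fintype.card ι).factorial := by
  obtain ⟨g, hA⟩ := exists_rows_isUnit w hind
  set A : Matrix ι ι ℚ := Matrix.of fun k l : ι => w k (g l) with hAdef
  -- integer determinant
  have hentries : ∀ k l, A k l = 1 ∨ A k l = -1 := fun k l => hw k (g l)
  have hdet_int : ∃ z : ℤ, (Aᵀ).det = (z : ℚ) := by
    classical
    set Az : Matrix ι ι ℤ := Matrix.of fun k l => if Aᵀ k l = 1 then (1 : ℤ) else -1 with hAz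
    refine ⟨Az.det, ?_⟩
    have : Aᵀ = Az.map (Int.cast : ℤ → ℚ) := by
      funext k l
      rcases hentries l k with h | h <;>
        simp [Az, Matrix.map_apply, Matrix.transpose_apply, h]
    rw [this, show (Int.cast : ℤ → ℚ) = ⇑(Int.castRingHom ℚ) from rfl,
      ← RingHom.mapMatrix_apply, ← RingHom.map_det]
  have hAT : IsUnit Aᵀ := (Matrix.isUnit_transpose (A := A)).mpr hA
  have hdet_ne : Aᵀ.det ≠ 0 := by
    intro h
    exact (Matrix.isUnit_iff_isUnit_det _ |>.mp hAT).ne_zero h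
  have hdet_ge : (1 : ℚ) ≤ |Aᵀ.det| := by
    obtain ⟨z, hz⟩ := hdet_int
    rw [hz] at hdet_ne ⊢
    have : z ≠ 0 := by exact_mod_cast hdet_ne
    rw [← Int.cast_abs]
    exact_mod_cast Int.one_le_abs this
  -- the linear system: Aᵀ *ᵥ a = 1
  have hsys : Aᵀ *ᵥ a = fun _ => (1 : ℚ) := by
    funext l
    rw [Matrix.mulVec]
    simp only [dotProduct, Matrix.transpose_apply]
    rw [ha (g l)]
    exact Finset.sum_congr rfl fun k _ => by simp [A, mul_comm]
  -- Cramer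
  have hcram := Matrix.mulVec_cramer Aᵀ (fun _ => (1 : ℚ))
  have hinj : Function.Injective (Aᵀ).mulVec := mulVec_injective_iff_isUnit.mpr hAT
  have haval : a = (Aᵀ.det)⁻¹ • Aᵀ.cramer (fun _ => (1 : ℚ)) := by
    apply hinj
    rw [hsys, Matrix.mulVec_smul, hcram, smul_smul, inv_mul_cancel₀ hdet_ne, one_smul]
  intro k
  rw [haval]
  simp only [Pi.smul_apply, smul_eq_mul, abs_mul, abs_inv]
  have hnum : |Aᵀ.cramer (fun _ => (1 : ℚ)) k| ≤ (Fintype.card ι).factorial := by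
    rw [Matrix.cramer_apply]
    apply det_abs_le_factorial
    intro k' l'
    by_cases h : l' = k
    · simp [Matrix.updateCol_apply, h]
    · rw [Matrix.updateCol_apply, if_neg h]
      rcases hentries l' k' with h' | h' <;> simp [Matrix.transpose_apply, h']
  calc |Aᵀ.det|⁻¹ * |Aᵀ.cramer (fun _ => (1 : ℚ)) k|
      ≤ 1 * ((Fintype.card ι).factorial : ℚ) := by
        apply mul_le_mul
        · rw [inv_le_one_iff₀]; right; exact hdet_ge
        · exact hnum
        · exact abs_nonneg _
        · exact zero_le_one
    _ = _ := one_mul _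

lemma exists_functional (F : Type*) [Field F] [CharZero F] :
    ∃ φ : F →ₗ[ℚ] ℚ, φ 1 = 1 := by
  have h1 : (1 : F) ≠ 0 := one_ne_zero
  let e := LinearEquiv.toSpanNonzeroSingleton ℚ F 1 h1
  obtain ⟨g, hg⟩ := LinearMap.exists_extend (e.symm.toLinearMap)
  refine ⟨g, ?_⟩
  have hmem : (1 : F) ∈ Submodule.span ℚ {(1 : F)} := Submodule.mem_span_singleton_self _
  have h2 : (⟨1, hmem⟩ : Submodule.span ℚ {(1 : F)}) = e 1 := by
    apply Subtype.ext
    simp [e, LinearEquiv.toSpanNonzeroSingleton]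
  calc g 1 = g ((Submodule.span ℚ {(1:F)}).subtype ⟨1, hmem⟩) := rfl
    _ = e.symm ⟨1, hmem⟩ := by rw [← LinearMap.comp_apply, hg]; rfl
    _ = 1 := by rw [h2, LinearEquiv.symm_apply_apply]



/-- No small span of balanced ±1 vectors containing the all-ones vector,
characteristic 0 case. If the all-ones vector is an `F`-linear combination of `t` vectors
in `{-1,1}^n` each with coordinate sum at most `n/s` in absolute value, then `(t+1)! ≥ s`. -/
theorem stmt2 (n s t : ℕ) (hn : 1 ≤ n) (hs : 1 ≤ s) (ht : 1 ≤ t) (hsn : s ≤ n)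
    (F : Type*) [Field F] [CharZero F]
    (x : Fin t → Fin n → ℤ)
    (hx : ∀ i j, x i j = 1 ∨ x i j = -1)
    (hbal : ∀ i, |((∑ j, x i j : ℤ) : ℚ)| ≤ (n : ℚ) / (s : ℚ))
    (c : Fin t → F)
    (hspan : ∀ j, (1 : F) = ∑ i, c i * ((x i j : ℤ) : F)) :
    s ≤ (t + 1).factorial := by
    classical
  obtain ⟨φ, hφ⟩ := exists_functional F
  set c' : Fin t → ℚ := fun i => φ (c i) with hc'
  have hQ : ∀ j, (1 : ℚ) = ∑ i, c' i * ((x i j : ℤ) : ℚ) := by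
    intro j
    have h0 := congrArg φ (hspan j)
    rw [map_sum, hφ] at h0
    rw [h0]
    refine Finset.sum_congr rfl fun i _ => ?_
    have key : c i * ((x i j : ℤ) : F) = ((x i j : ℤ) : ℚ) • c i := by
      rw [Rat.smul_def]; push_cast; ring
    rw [key, map_smul, smul_eq_mul, mul_comm]
  set u : Fin t → (Fin n → ℚ) := fun i j => ((x i j : ℤ) : ℚ) with hu
  set o : Fin n → ℚ := fun _ => 1 with ho_def
  have ho : o ∈ Submodule.span ℚ (Set.range u) := by
    have : o = ∑ i, c' i • u i := by
      funext j
      simp only [Finset.sum_apply, Pi.smul_apply, smul_eq_mul]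
      exact hQ j
    rw [this]
    exact Submodule.sum_mem _ fun i _ =>
      Submodule.smul_mem _ _ (Submodule.subset_span ⟨i, rfl⟩)
  obtain ⟨b, hb_sub, hb_span, hb_ind⟩ := exists_linearIndependent ℚ (Set.range u)
  have hb_fin : b.Finite := (Set.finite_range u).subset hb_sub
  haveI : Fintype b := hb_fin.fintype
  have hcard : Fintype.card b ≤ t := by
    have h1 : Nat.card b ≤ Nat.card (Set.range u) :=
      Nat.card_mono (Set.finite_range u) hb_sub
    have h2 : Nat.card (Set.range u) ≤ t := by
      have := Finite.card_range_le u
      simpa using this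
    rw [Nat.card_eq_fintype_card] at h1
    omega
  rw [← hb_span] at ho
  rw [show b = Set.range ((↑) : b → (Fin n → ℚ)) from (Subtype.range_coe).symm] at ho
  obtain ⟨a, ha⟩ := (Submodule.mem_span_range_iff_exists_fun ℚ).mp ho
  have hentry : ∀ (v : b) (j : Fin n), (v : Fin n → ℚ) j = 1 ∨ (v : Fin n → ℚ) j = -1 := by
    rintro ⟨v, hv⟩ j
    obtain ⟨i, rfl⟩ := hb_sub hv
    rcases hx i j with h | h <;> simp [u, h]
  have hasys : ∀ j, (1 : ℚ) = ∑ v : b, a v * (v : Fin n → ℚ) j := by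
    intro j
    have := congrFun ha j
    simp only [Finset.sum_apply, Pi.smul_apply, smul_eq_mul] at this
    exact this.symm
  have hbound := coeff_bound (fun v : b => (v : Fin n → ℚ)) hentry hb_ind a hasys
  -- choose representatives
  choose ix hix using fun v : b => hb_sub v.2
  -- sum over j
  have hsum : (n : ℚ) = ∑ v : b, a v * (∑ j, (v : Fin n → ℚ) j) := by
    calc (n : ℚ) = ∑ _j : Fin n, (1 : ℚ) := by simp
      _ = ∑ j : Fin n, ∑ v : b, a v * (v : Fin n → ℚ) j :=
          Finset.sum_congr rfl fun j _ => hasys j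
      _ = ∑ v : b, a v * (∑ j, (v : Fin n → ℚ) j) := by
          rw [Finset.sum_comm]
          exact Finset.sum_congr rfl fun v _ => by rw [Finset.mul_sum]
  have hS : ∀ v : b, |∑ j, (v : Fin n → ℚ) j| ≤ (n : ℚ) / s := by
    intro v
    have h1 : ∑ j, (v : Fin n → ℚ) j = ((∑ j, x (ix v) j : ℤ) : ℚ) := by
      push_cast
      refine Finset.sum_congr rfl fun j _ => ?_
      rw [← hix v]
    rw [h1]
    exact hbal (ix v)
  have hfac : ((Fintype.card b).factorial : ℚ) ≤ (t.factorial : ℚ) := by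
    exact_mod_cast Nat.factorial_le hcard
  have hchain : (n : ℚ) ≤ (t : ℚ) * t.factorial * ((n : ℚ) / s) := by
    calc (n : ℚ) = ∑ v : b, a v * (∑ j, (v : Fin n → ℚ) j) := hsum
      _ ≤ ∑ v : b, |a v * (∑ j, (v : Fin n → ℚ) j)| :=
          Finset.sum_le_sum fun v _ => le_abs_self _
      _ ≤ ∑ v : b, (t.factorial : ℚ) * ((n : ℚ) / s) := by
          refine Finset.sum_le_sum fun v _ => ?_
          rw [abs_mul]
          refine mul_le_mul ((hbound v).trans hfac) (hS v) (abs_nonneg _) ?_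
          positivity
      _ = (Fintype.card b : ℚ) * ((t.factorial : ℚ) * ((n : ℚ) / s)) := by
          rw [Finset.sum_const, Finset.card_univ, nsmul_eq_mul]
      _ ≤ (t : ℚ) * ((t.factorial : ℚ) * ((n : ℚ) / s)) := by
          refine mul_le_mul_of_nonneg_right ?_ ?_
          · exact_mod_cast hcard
          · positivity
      _ = (t : ℚ) * t.factorial * ((n : ℚ) / s) := by ring
  have hs0 : (0 : ℚ) < s := by exact_mod_cast hs
  have hn0 : (0 : ℚ) < n := by exact_mod_cast hn
  have hst : (s : ℚ) ≤ (t : ℚ) * t.factorial := by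
    have h2 : (s : ℚ) * n ≤ (t : ℚ) * t.factorial * n := by
      calc (s : ℚ) * n ≤ s * ((t : ℚ) * t.factorial * ((n : ℚ) / s)) :=
            mul_le_mul_of_nonneg_left hchain hs0.le
        _ = (t : ℚ) * t.factorial * n := by field_simp
    exact le_of_mul_le_mul_right h2 hn0
  have hnat : s ≤ t * t.factorial := by exact_mod_cast hst
  calc s ≤ t * t.factorial := hnat
    _ ≤ (t + 1) * t.factorial := Nat.mul_le_mul_right _ (Nat.le_succ t)
    _ = (t + 1).factorial := (Nat.factorial_succ t).symm
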